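/- Let n = 2 and c > 0. There exists C > 0 such that for all t ≥ 0, ∫_{{ξ ∈ ℝ² : |ξ| ≤ 1}} |ξ|^{-2} sin²(|ξ| t) e^{-c|ξ|² t} dξ ≤ C log(e + t). -/

import Mathlib

open MeasureTheory

open Set Metric
theorem stmt_9 (c : ℝ) (hc : 0 < c) :
    ∃ C > (0:ℝ), ∀ t ≥ (0:ℝ),
      (∫ ξ in Metric.closedBall (0 : EuclideanSpace ℝ (Fin 2)) 1,
          ‖ξ‖ ^ (-(2:ℝ)) * Real.sin (‖ξ‖ * t)^2 * Real.exp (-c * ‖ξ‖^2 * t))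
        ≤ C * Real.log (Real.exp 1 + t) := by
  set V : ℝ := (volume (Metric.ball (0 : EuclideanSpace ℝ (Fin 2)) 1)).toReal with hVdef
  have hV0 : 0 ≤ V := ENNReal.toReal_nonneg
  refine ⟨3 * V + 1, by positivity, fun t ht => ?_⟩
  have hE : (1:ℝ) ≤ Real.exp 1 := by
    have := Real.add_one_le_exp (1:ℝ); linarith
  have hL : 1 ≤ Real.log (Real.exp 1 + t) := by
    calc (1:ℝ) = Real.log (Real.exp 1) := (Real.log_exp 1).symm
    _ ≤ _ := Real.log_le_log (Real.exp_pos 1) (by linarith)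
  set F : ℝ → ℝ := fun r => (Set.Ioc (0:ℝ) 1).indicator (fun r => min (t^2) (r^2)⁻¹) r with hF
  have hFnonneg : ∀ r, 0 ≤ F r := fun r => by
    apply Set.indicator_nonneg; intro y _; positivity
  have hFle : ∀ r, F r ≤ t^2 := fun r => by
    by_cases h : r ∈ Set.Ioc (0:ℝ) 1
    · simp only [hF, Set.indicator_of_mem h]; exact min_le_left _ _
    · simp only [hF, Set.indicator_of_notMem h]; positivity
  have hFmeas : Measurable F :=
    (measurable_const.min ((measurable_id.pow_const 2).inv)).indicator measurableSet_Ioc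
  set g : EuclideanSpace ℝ (Fin 2) → ℝ := fun ξ => F ‖ξ‖ with hg
  have hgmeas : Measurable g := hFmeas.comp measurable_norm
  have hgint : IntegrableOn g (Metric.closedBall (0 : EuclideanSpace ℝ (Fin 2)) 1) volume := by
    apply Measure.integrableOn_of_bounded (M := t^2) measure_closedBall_lt_top.ne
      hgmeas.aestronglyMeasurable
    filter_upwards with ξ
    rw [Real.norm_eq_abs, abs_of_nonneg (hFnonneg _)]; exact hFle _
  -- pointwise bound f ≤ g on the ball
  have hfg : ∀ ξ ∈ Metric.closedBall (0 : EuclideanSpace ℝ (Fin 2)) 1,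
      ‖ξ‖ ^ (-(2:ℝ)) * Real.sin (‖ξ‖ * t)^2 * Real.exp (-c * ‖ξ‖^2 * t) ≤ g ξ := by
    intro ξ hξ
    have hr1 : ‖ξ‖ ≤ 1 := by simpa [mem_closedBall, dist_zero_right] using hξ
    rcases eq_or_ne ξ 0 with rfl | hne
    · simp [hg, hF, Real.zero_rpow (show (-(2:ℝ)) ≠ 0 by norm_num)]
    · have hr0 : 0 < ‖ξ‖ := norm_pos_iff.2 hne
      set r := ‖ξ‖
      have hgr : g ξ = min (t^2) (r^2)⁻¹ :=
        Set.indicator_of_mem (by exact ⟨hr0, hr1⟩) _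
      have hrw : r ^ (-(2:ℝ)) = (r^2)⁻¹ := by
        rw [Real.rpow_neg hr0.le, show ((2:ℝ)) = ((2:ℕ):ℝ) by norm_num, Real.rpow_natCast]
      have hexp : Real.exp (-c * r^2 * t) ≤ 1 := by
        rw [Real.exp_le_one_iff]
        have : 0 ≤ c * r^2 * t := by positivity
        linarith
      have hsin1 : Real.sin (r*t)^2 ≤ 1 := Real.sin_sq_le_one _
      have hsin2 : Real.sin (r*t)^2 ≤ (r*t)^2 := Real.sin_sq_le_sq
      have hinv : (0:ℝ) ≤ (r^2)⁻¹ := by positivity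
      rw [hgr, hrw]
      refine le_min ?_ ?_
      · calc (r^2)⁻¹ * Real.sin (r*t)^2 * Real.exp (-c * r^2 * t)
            ≤ (r^2)⁻¹ * (r*t)^2 * 1 := by
              apply mul_le_mul (mul_le_mul_of_nonneg_left hsin2 hinv) hexp
                (Real.exp_pos _).le (by positivity)
        _ = t^2 := by field_simp
      · calc (r^2)⁻¹ * Real.sin (r*t)^2 * Real.exp (-c * r^2 * t)
            ≤ (r^2)⁻¹ * 1 * 1 := by
              apply mul_le_mul (mul_le_mul_of_nonneg_left hsin1 hinv) hexp
                (Real.exp_pos _).le (by positivity)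
        _ = (r^2)⁻¹ := by ring
  -- step A : compare with g
  have stepA : (∫ ξ in Metric.closedBall (0 : EuclideanSpace ℝ (Fin 2)) 1,
      ‖ξ‖ ^ (-(2:ℝ)) * Real.sin (‖ξ‖ * t)^2 * Real.exp (-c * ‖ξ‖^2 * t))
      ≤ ∫ ξ in Metric.closedBall (0 : EuclideanSpace ℝ (Fin 2)) 1, g ξ := by
    apply integral_mono_of_nonneg
    · filter_upwards with ξ; positivity
    · exact hgint
    · exact (ae_restrict_iff' measurableSet_closedBall).2 (ae_of_all _ hfg)
  -- step B+C : polar coordinates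
  have stepBC : (∫ ξ in Metric.closedBall (0 : EuclideanSpace ℝ (Fin 2)) 1, g ξ)
      = 2 * V * ∫ y in Set.Ioi (0:ℝ), y ^ 1 • F y := by
    rw [setIntegral_eq_integral_of_forall_compl_eq_zero (fun x hx => ?_),
      integral_fun_norm_addHaar volume F]
    · norm_num [finrank_euclideanSpace_fin, mul_assoc]; exact Or.inl rfl
    · have h1 : (1:ℝ) < ‖x‖ := by simpa [mem_closedBall, dist_zero_right] using hx
      exact Set.indicator_of_notMem (by simp [Set.mem_Ioc]; intro h; linarith) _
  -- step D : reduce to a 1D integral on Ioc 0 1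
  have stepD : (∫ y in Set.Ioi (0:ℝ), y ^ 1 • F y)
      = ∫ y in Set.Ioc (0:ℝ) 1, y * min (t^2) (y^2)⁻¹ := by
    have h : ∀ y : ℝ, y ^ 1 • F y
        = (Set.Ioc (0:ℝ) 1).indicator (fun y => y * min (t^2) (y^2)⁻¹) y := by
      intro y; by_cases h : y ∈ Set.Ioc (0:ℝ) 1 <;>
        simp [hF, Set.indicator_of_mem, Set.indicator_of_notMem, h]
    simp_rw [h]
    rw [setIntegral_indicator measurableSet_Ioc]
    congr 1
    rw [Set.inter_eq_right.2 Set.Ioc_subset_Ioi_self]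
  -- step E : bound the 1D integral
  set a : ℝ := (1+t)⁻¹ with ha
  have ha0 : 0 < a := by positivity
  have ha1 : a ≤ 1 := by
    rw [ha, inv_le_one_iff₀]; right; linarith
  have hta : t * a ≤ 1 := by
    rw [ha, ← div_eq_mul_inv, div_le_one (by linarith)]; linarith
  have hmeas1 : Measurable fun y : ℝ => y * min (t^2) (y^2)⁻¹ :=
    measurable_id.mul (measurable_const.min ((measurable_id.pow_const 2).inv))
  have hintOn : IntegrableOn (fun y => y * min (t^2) (y^2)⁻¹) (Set.Ioc (0:ℝ) 1) volume := by
    apply Measure.integrableOn_of_bounded (M := t^2) measure_Ioc_lt_top.ne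
      hmeas1.aestronglyMeasurable
    rw [ae_restrict_iff' measurableSet_Ioc]
    filter_upwards with y hy
    have hy0 : 0 < y := hy.1
    have h1 : 0 ≤ y * min (t^2) (y^2)⁻¹ :=
      mul_nonneg hy0.le (le_min (by positivity) (by positivity))
    rw [Real.norm_eq_abs, abs_of_nonneg h1]
    calc y * min (t^2) (y^2)⁻¹ ≤ y * t^2 :=
          mul_le_mul_of_nonneg_left (min_le_left _ _) hy0.le
    _ ≤ 1 * t^2 := by nlinarith [hy.2, sq_nonneg t]
    _ = t^2 := one_mul _
  have hsplit : (∫ y in Set.Ioc (0:ℝ) 1, y * min (t^2) (y^2)⁻¹)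
      = (∫ y in Set.Ioc (0:ℝ) a, y * min (t^2) (y^2)⁻¹)
        + ∫ y in Set.Ioc a 1, y * min (t^2) (y^2)⁻¹ := by
    rw [← setIntegral_union (Set.Ioc_disjoint_Ioc_of_le le_rfl) measurableSet_Ioc
      (hintOn.mono_set (Set.Ioc_subset_Ioc_right ha1))
      (hintOn.mono_set (Set.Ioc_subset_Ioc_left ha0.le)),
      Set.Ioc_union_Ioc_eq_Ioc ha0.le ha1]
  have hp1 : (∫ y in Set.Ioc (0:ℝ) a, y * min (t^2) (y^2)⁻¹) ≤ 1/2 := by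
    have h1 : (∫ y in Set.Ioc (0:ℝ) a, y * min (t^2) (y^2)⁻¹)
        ≤ ∫ y in Set.Ioc (0:ℝ) a, t^2 * y := by
      apply setIntegral_mono_on (hintOn.mono_set (Set.Ioc_subset_Ioc_right ha1)) ?_
        measurableSet_Ioc ?_
      · rw [← intervalIntegrable_iff_integrableOn_Ioc_of_le ha0.le]
        exact ((continuous_const.mul continuous_id).intervalIntegrable _ _)
      · intro y hy
        calc y * min (t^2) (y^2)⁻¹ ≤ y * t^2 :=
              mul_le_mul_of_nonneg_left (min_le_left _ _) hy.1.le
        _ = t^2 * y := mul_comm _ _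
    have h2 : (∫ y in Set.Ioc (0:ℝ) a, t^2 * y) = t^2 * (a^2/2) := by
      rw [← intervalIntegral.integral_of_le ha0.le,
        intervalIntegral.integral_const_mul, integral_id]
      ring
    have h3 : t^2 * (a^2/2) ≤ 1/2 := by
      nlinarith [hta, mul_nonneg ht ha0.le]
    linarith
  have hp2 : (∫ y in Set.Ioc a 1, y * min (t^2) (y^2)⁻¹) ≤ Real.log (1 + t) := by
    have h1 : (∫ y in Set.Ioc a 1, y * min (t^2) (y^2)⁻¹)
        ≤ ∫ y in Set.Ioc a 1, y⁻¹ := by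
      apply setIntegral_mono_on (hintOn.mono_set (Set.Ioc_subset_Ioc_left ha0.le)) ?_
        measurableSet_Ioc ?_
      · rw [← intervalIntegrable_iff_integrableOn_Ioc_of_le ha1]
        apply intervalIntegral.intervalIntegrable_inv _ continuousOn_id
        intro x hx
        rw [Set.uIcc_of_le ha1] at hx
        exact (ha0.trans_le hx.1).ne'
      · intro y hy
        have hy0 : 0 < y := ha0.trans hy.1
        calc y * min (t^2) (y^2)⁻¹ ≤ y * (y^2)⁻¹ :=
              mul_le_mul_of_nonneg_left (min_le_right _ _) hy0.le
        _ = y⁻¹ := by field_simp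
    have h2 : (∫ y in Set.Ioc a 1, y⁻¹) = Real.log (1 + t) := by
      rw [← intervalIntegral.integral_of_le ha1, integral_inv_of_pos ha0 one_pos, ha,
        one_div, inv_inv]
    linarith
  have hlog' : Real.log (1 + t) ≤ Real.log (Real.exp 1 + t) :=
    Real.log_le_log (by linarith) (by linarith)
  -- assemble
  calc (∫ ξ in Metric.closedBall (0 : EuclideanSpace ℝ (Fin 2)) 1,
          ‖ξ‖ ^ (-(2:ℝ)) * Real.sin (‖ξ‖ * t)^2 * Real.exp (-c * ‖ξ‖^2 * t))
      ≤ ∫ ξ in Metric.closedBall (0 : EuclideanSpace ℝ (Fin 2)) 1, g ξ := stepA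
    _ = 2 * V * ∫ y in Set.Ioc (0:ℝ) 1, y * min (t^2) (y^2)⁻¹ := by
        rw [stepBC, stepD]
    _ ≤ 2 * V * (3/2 * Real.log (Real.exp 1 + t)) := by
        apply mul_le_mul_of_nonneg_left _ (by positivity)
        rw [hsplit]
        have : Real.log (1+t) ≤ Real.log (Real.exp 1 + t) := hlog'
        nlinarith
    _ = 3 * V * Real.log (Real.exp 1 + t) := by ring
    _ ≤ (3 * V + 1) * Real.log (Real.exp 1 + t) := by nlinarith
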